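/- Let Φ satisfy tempered distortion. For each θ > 0 there exists ε_0 > 0 such that for all 0 < ε < ε_0 there exists N_0 with: for all N ≥ N_0 and all s ∈ ℝ, 𝓜^{s+θ}_{N, ε/2}(Z,Φ) ≤ W^s_{N,ε}(Z,Φ), where 𝓜 denotes the cover quantity with weights exp[−n_i s + φ_{n_i}(x_i)] (potential evaluated at the centers). -/

import Mathlib

open Filter Set MeasureTheory Metric Topology ENNReal

variable {X : Type*} [MetricSpace X]

/-- The Bowen ball of order `n` and radius `r` around `x`. -/
def bowenBall (T : X → X) (n : ℕ) (x : X) (r : ℝ) : Set X :=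
  {y | ∀ j < n, dist (T^[j] x) (T^[j] y) < r}

/-- The neutralized Bowen ball `B_n(x, e^{-nε})`. -/
noncomputable def nBall (T : X → X) (n : ℕ) (ε : ℝ) (x : X) : Set X :=
  bowenBall T n x (Real.exp (-(n * ε)))

/-- The weight `exp[-n s + sup_{B_n(x,e^{-nε})} φ_n]` of a neutralized Bowen ball. -/
noncomputable def wSup (T : X → X) (φ : ℕ → X → ℝ) (s ε : ℝ) (n : ℕ) (x : X) : ℝ≥0∞ :=
  ENNReal.ofReal (Real.exp (-(n : ℝ) * s + sSup ((φ n) '' nBall T n ε x)))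

/-- `M^s_{N,ε}(Z,Φ)`: infimum over countable covers of `Z` by neutralized Bowen balls
of orders `≥ N`. -/
noncomputable def MN (T : X → X) (φ : ℕ → X → ℝ) (Z : Set X) (s ε : ℝ) (N : ℕ) : ℝ≥0∞ :=
  ⨅ (D : Set (X × ℕ)) (_ : D.Countable) (_ : ∀ p ∈ D, N ≤ p.2)
    (_ : Z ⊆ ⋃ p ∈ D, nBall T p.2 ε p.1),
    ∑' p : D, wSup T φ s ε p.1.2 p.1.1

/-- `M^s_ε(Z,Φ) = lim_{N→∞} M^s_{N,ε}(Z,Φ)` (the limit of a nondecreasing sequence). -/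
noncomputable def Mlim (T : X → X) (φ : ℕ → X → ℝ) (Z : Set X) (s ε : ℝ) : ℝ≥0∞ :=
  ⨆ N, MN T φ Z s ε N

/-- The critical value `M_ε(Z,Φ)`. -/
noncomputable def Mcrit (T : X → X) (φ : ℕ → X → ℝ) (Z : Set X) (ε : ℝ) : ℝ :=
  sInf {s | Mlim T φ Z s ε = 0}

/-- The non-additive neutralized Bowen topological pressure
`P^B̃_Z(T,Φ) = lim_{ε→0} M_ε(Z,Φ) = inf_{ε>0} M_ε(Z,Φ)`. -/
noncomputable def PB (T : X → X) (φ : ℕ → X → ℝ) (Z : Set X) : ℝ :=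
  sInf (Mcrit T φ Z '' Ioi 0)

/-- `M̃^s_{N,ε}(Z,Φ)`: as `M^s_{N,ε}` but with the potential evaluated at an arbitrary
chosen point `z_i` of each covering ball. -/
noncomputable def MtN (T : X → X) (φ : ℕ → X → ℝ) (Z : Set X) (s ε : ℝ) (N : ℕ) : ℝ≥0∞ :=
  ⨅ (D : Set ((X × ℕ) × X)) (_ : D.Countable)
    (_ : ∀ p ∈ D, N ≤ p.1.2 ∧ p.2 ∈ nBall T p.1.2 ε p.1.1)
    (_ : Z ⊆ ⋃ p ∈ D, nBall T p.1.2 ε p.1.1),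
    ∑' p : D, ENNReal.ofReal (Real.exp (-(p.1.1.2 : ℝ) * s + φ p.1.1.2 p.1.2))

noncomputable def Mtlim (T : X → X) (φ : ℕ → X → ℝ) (Z : Set X) (s ε : ℝ) : ℝ≥0∞ :=
  ⨆ N, MtN T φ Z s ε N

noncomputable def MtCrit (T : X → X) (φ : ℕ → X → ℝ) (Z : Set X) (ε : ℝ) : ℝ :=
  sInf {s | Mtlim T φ Z s ε = 0}

/-- `𝓜^s_{N,ε}(Z,Φ)`: as `M^s_{N,ε}` but with the potential evaluated at the centers. -/
noncomputable def McN (T : X → X) (φ : ℕ → X → ℝ) (Z : Set X) (s ε : ℝ) (N : ℕ) : ℝ≥0∞ :=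
  ⨅ (D : Set (X × ℕ)) (_ : D.Countable) (_ : ∀ p ∈ D, N ≤ p.2)
    (_ : Z ⊆ ⋃ p ∈ D, nBall T p.2 ε p.1),
    ∑' p : D, ENNReal.ofReal (Real.exp (-(p.1.2 : ℝ) * s + φ p.1.2 p.1.1))

/-- `W^s_{N,ε}(Z,Φ)`: the weighted version, over countable families of neutralized Bowen
balls with positive coefficients `c_i` such that `Σ c_i χ_{B_i} ≥ χ_Z`. -/
noncomputable def WN (T : X → X) (φ : ℕ → X → ℝ) (Z : Set X) (s ε : ℝ) (N : ℕ) : ℝ≥0∞ :=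
  ⨅ (D : Set ((X × ℕ) × ℝ)) (_ : D.Countable)
    (_ : ∀ p ∈ D, N ≤ p.1.2 ∧ 0 < p.2)
    (_ : ∀ x ∈ Z, (1 : ℝ≥0∞) ≤ ∑' p : D,
        (nBall T p.1.1.2 ε p.1.1.1).indicator (fun _ => ENNReal.ofReal p.1.2) x),
    ∑' p : D, ENNReal.ofReal p.1.2 * wSup T φ s ε p.1.1.2 p.1.1.1

noncomputable def Wlim (T : X → X) (φ : ℕ → X → ℝ) (Z : Set X) (s ε : ℝ) : ℝ≥0∞ :=
  ⨆ N, WN T φ Z s ε N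

noncomputable def Wcrit (T : X → X) (φ : ℕ → X → ℝ) (Z : Set X) (ε : ℝ) : ℝ :=
  sInf {s | Wlim T φ Z s ε = 0}

/-- The non-additive neutralized weighted Bowen topological pressure `P^W̃B_Z(T,Φ)`. -/
noncomputable def PWB (T : X → X) (φ : ℕ → X → ℝ) (Z : Set X) : ℝ :=
  sInf (Wcrit T φ Z '' Ioi 0)

/-- The distortion `φ_n(ε) = sup{|φ_n(x) - φ_n(y)| : x ∈ X, y ∈ B_n(x, e^{-nε})}`. -/
noncomputable def distortion (T : X → X) (φ : ℕ → X → ℝ) (n : ℕ) (ε : ℝ) : ℝ :=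
  sSup {r | ∃ x y, y ∈ nBall T n ε x ∧ r = |φ n x - φ n y|}

/-- The tempered distortion condition `lim_{ε→0} limsup_{n→∞} φ_n(ε)/n = 0`. -/
def Tempered (T : X → X) (φ : ℕ → X → ℝ) : Prop :=
  Tendsto (fun ε => limsup (fun n : ℕ => distortion T φ n ε / n) atTop)
    (𝓝[>] (0 : ℝ)) (𝓝 0)

section Measures

variable [MeasurableSpace X]

/-- `Λ^s_{N,ε}(μ,Φ,δ)`: infimum over countable families of neutralized Bowen balls of
orders `≥ N` whose union has `μ`-measure `> 1 - δ`. -/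
noncomputable def ΛN (T : X → X) (φ : ℕ → X → ℝ) (μ : Measure X) (s ε δ : ℝ) (N : ℕ) :
    ℝ≥0∞ :=
  ⨅ (D : Set (X × ℕ)) (_ : D.Countable) (_ : ∀ p ∈ D, N ≤ p.2)
    (_ : ENNReal.ofReal (1 - δ) < μ (⋃ p ∈ D, nBall T p.2 ε p.1)),
    ∑' p : D, wSup T φ s ε p.1.2 p.1.1

noncomputable def Λlim (T : X → X) (φ : ℕ → X → ℝ) (μ : Measure X) (s ε δ : ℝ) : ℝ≥0∞ :=
  ⨆ N, ΛN T φ μ s ε δ N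

/-- The critical value `Λ_ε(μ,Φ,δ)`. -/
noncomputable def Λcrit (T : X → X) (φ : ℕ → X → ℝ) (μ : Measure X) (ε δ : ℝ) : ℝ :=
  sInf {s | Λlim T φ μ s ε δ = 0}

/-- The neutralized Katok pressure `P^K̃_μ(T,Φ,ε) = lim_{δ→0} Λ_ε(μ,Φ,δ)`. -/
noncomputable def PK (T : X → X) (φ : ℕ → X → ℝ) (μ : Measure X) (ε : ℝ) : ℝ :=
  sSup ((fun δ => Λcrit T φ μ ε δ) '' Ioo (0 : ℝ) 1)

/-- The lower neutralized Brin–Katok local pressure at `x`. -/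
noncomputable def PBKx (T : X → X) (φ : ℕ → X → ℝ) (μ : Measure X) (ε : ℝ) (x : X) : ℝ :=
  liminf (fun n : ℕ => (-Real.log ((μ (nBall T n ε x)).toReal) + φ n x) / n) atTop

/-- The lower neutralized Brin–Katok local pressure `P̲^B̃K_μ(T,Φ,ε)`. -/
noncomputable def PBK (T : X → X) (φ : ℕ → X → ℝ) (μ : Measure X) (ε : ℝ) : ℝ :=
  ∫ x, PBKx T φ μ ε x ∂μ

/-- `sup{P̲^B̃K_μ(T,Φ,ε) : μ ∈ M(X), μ(Z) = 1}`. -/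
noncomputable def supBK (T : X → X) (φ : ℕ → X → ℝ) (Z : Set X) (ε : ℝ) : ℝ :=
  sSup {p | ∃ μ : Measure X, IsProbabilityMeasure μ ∧ μ Z = 1 ∧ p = PBK T φ μ ε}

/-- `lim_{ε→0} sup{P̲^B̃K_μ(T,Φ,ε) : μ(Z)=1}`, realized as the infimum over `ε > 0`. -/
noncomputable def limSupBK (T : X → X) (φ : ℕ → X → ℝ) (Z : Set X) : ℝ :=
  sInf (supBK T φ Z '' Ioi 0)

/-- `sup{P^K̃_μ(T,Φ,ε) : μ ∈ M(X), μ(Z) = 1}`. -/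
noncomputable def supK (T : X → X) (φ : ℕ → X → ℝ) (Z : Set X) (ε : ℝ) : ℝ :=
  sSup {p | ∃ μ : Measure X, IsProbabilityMeasure μ ∧ μ Z = 1 ∧ p = PK T φ μ ε}

/-- `lim_{ε→0} sup{P^K̃_μ(T,Φ,ε) : μ(Z)=1}`, realized as the infimum over `ε > 0`. -/
noncomputable def limSupK (T : X → X) (φ : ℕ → X → ℝ) (Z : Set X) : ℝ :=
  sInf (supK T φ Z '' Ioi 0)

end Measures

section Aux

theorem isOpen_bowenBall {X : Type*} [MetricSpace X] {T : X → X} (hT : Continuous T)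
    (n : ℕ) (x : X) (r : ℝ) : IsOpen (bowenBall T n x r) := by
  have : bowenBall T n x r = ⋂ j ∈ Finset.range n, (T^[j]) ⁻¹' (Metric.ball (T^[j] x) r) := by
    ext y
    simp [bowenBall, Metric.mem_ball, dist_comm]
  rw [this]
  exact isOpen_biInter_finset fun j _ => (Metric.isOpen_ball).preimage (hT.iterate j)

theorem bowenBall_mono {X : Type*} [MetricSpace X] (T : X → X) (n : ℕ) (x : X) {r r' : ℝ}
    (h : r ≤ r') : bowenBall T n x r ⊆ bowenBall T n x r' :=
  fun _ hy j hj => lt_of_lt_of_le (hy j hj) h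

theorem tsum_fiber {α : Type*} (g : α → ℕ) (f : α → ℝ≥0∞) :
    ∑' a, f a = ∑' (n) (b : {a // g a = n}), f b.1 := by
  rw [← (Equiv.sigmaFiberEquiv g).tsum_eq f]
  exact ENNReal.tsum_sigma' _

theorem tsum_le_of_unique {ι : Type*} (f : ι → ℝ≥0∞) (b : ℝ≥0∞) (hb : ∀ i, f i ≤ b)
    (h : ∀ i j, f i ≠ 0 → f j ≠ 0 → i = j) : ∑' i, f i ≤ b := by
  by_cases he : ∃ i, f i ≠ 0
  · obtain ⟨i, hi⟩ := he
    rw [tsum_eq_single i (fun j hj => by_contra fun h0 => hj (h j i h0 hi))]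
    exact hb i
  · push_neg at he
    simp [he]

theorem core_cover {X : Type*} [MetricSpace X] [CompactSpace X] {T : X → X} (hT : Continuous T)
    {φn : X → ℝ} (hφ : Continuous φn) (n : ℕ) (ε s : ℝ)
    {ι : Type*} (x : ι → X) (c : ι → ℝ) (A : Set X) (t : ℝ≥0∞)
    (hA : ∀ z ∈ A, t ≤ ∑' i, (nBall T n ε (x i)).indicator (fun _ => ENNReal.ofReal (c i)) z) :
    ∃ Y : Set X, Y.Countable ∧ (A ⊆ ⋃ y ∈ Y, bowenBall T n y (2 * Real.exp (-(n * ε)))) ∧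
      (∑' y : Y, ENNReal.ofReal (Real.exp (-(n : ℝ) * s + φn y))) * t ≤
        ∑' i, ENNReal.ofReal (c i) *
          ENNReal.ofReal (Real.exp (-(n : ℝ) * s + sSup (φn '' nBall T n ε (x i)))) := by
  set r : ℝ := Real.exp (-(n * ε)) with hr_def
  have hr : 0 < r := Real.exp_pos _
  set P : X → X → Prop := fun a b => ∃ j < n, 2 * r ≤ dist (T^[j] a) (T^[j] b) with hP_def
  have hPsymm : Symmetric P := by
    intro a b ⟨j, hj, hd⟩
    exact ⟨j, hj, by rwa [dist_comm]⟩
  -- maximal pairwise-separated subset of A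
  obtain ⟨Y, hYmax⟩ := zorn_subset {Y : Set X | Y ⊆ A ∧ Y.Pairwise P} (by
    intro ch hch hchain
    refine ⟨⋃₀ ch, ⟨?_, ?_⟩, fun s hs => subset_sUnion_of_mem hs⟩
    · exact sUnion_subset fun s hs => (hch hs).1
    · intro a ha b hb hab
      obtain ⟨s1, hs1, ha1⟩ := ha
      obtain ⟨s2, hs2, hb2⟩ := hb
      rcases hchain.total hs1 hs2 with h | h
      · exact (hch hs2).2 (h ha1) hb2 hab
      · exact (hch hs1).2 ha1 (h hb2) hab)
  obtain ⟨⟨hYA, hYP⟩, hmax⟩ := hYmax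
  -- key separation: two distinct points of Y cannot lie in a common r-Bowen-ball
  have hsep : ∀ z : X, ∀ y y', y ∈ Y → y' ∈ Y →
      y ∈ bowenBall T n z r → y' ∈ bowenBall T n z r → y = y' := by
    intro z y y' hy hy' hby hby'
    by_contra hne
    obtain ⟨j, hj, hd⟩ := hYP hy hy' hne
    have h1 := hby j hj
    have h2 := hby' j hj
    have : dist (T^[j] y) (T^[j] y') < 2 * r := by
      calc dist (T^[j] y) (T^[j] y') ≤ dist (T^[j] y) (T^[j] z) + dist (T^[j] z) (T^[j] y') :=
            dist_triangle _ _ _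
        _ < r + r := by rw [dist_comm (T^[j] y)] ; exact add_lt_add h1 h2
        _ = 2 * r := by ring
    linarith
  -- countability
  have hYc : Y.Countable := by
    have hdisj : Y.PairwiseDisjoint (fun y => bowenBall T n y r) := by
      intro y hy y' hy' hne
      rw [Function.onFun, Set.disjoint_left]
      intro z hz hz'
      have hzy : y ∈ bowenBall T n z r := fun j hj => by rw [dist_comm] ; exact hz j hj
      have hzy' : y' ∈ bowenBall T n z r := fun j hj => by rw [dist_comm] ; exact hz' j hj
      exact hne (hsep z y y' hy hy' hzy hzy')
    exact hdisj.countable_of_isOpen (fun y _ => isOpen_bowenBall hT n y r)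
      (fun y _ => ⟨y, fun j hj => by simpa using hr⟩)
  refine ⟨Y, hYc, ?_, ?_⟩
  · -- covering by doubled balls
    intro z hz
    by_cases hzY : z ∈ Y
    · exact mem_biUnion hzY (fun j hj => by simpa using by positivity)
    · have hins : ¬ (insert z Y ⊆ A ∧ (insert z Y).Pairwise P) := by
        intro hmem
        have := hmax hmem (subset_insert _ _)
        exact hzY (this (mem_insert _ _))
      haveI : Std.Symm P := ⟨fun a b h => hPsymm h⟩
      rw [Set.pairwise_insert_of_symm] at hins
      push_neg at hins
      obtain ⟨b, hb, hbz, hnP⟩ := hins (insert_subset hz hYA) hYP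
      refine mem_biUnion hb ?_
      intro j hj
      rw [dist_comm]
      by_contra h
      exact hnP ⟨j, hj, le_of_not_gt h⟩
  · -- sum estimate
    have hbdd : ∀ i, BddAbove (φn '' nBall T n ε (x i)) := fun i =>
      ((isCompact_univ.image hφ).bddAbove).mono (Set.image_mono (subset_univ _))
    calc (∑' y : Y, ENNReal.ofReal (Real.exp (-(n : ℝ) * s + φn y))) * t
        = ∑' y : Y, ENNReal.ofReal (Real.exp (-(n : ℝ) * s + φn y)) * t :=
          ENNReal.tsum_mul_right.symm
      _ ≤ ∑' y : Y, ENNReal.ofReal (Real.exp (-(n : ℝ) * s + φn y)) *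
            ∑' i, (nBall T n ε (x i)).indicator (fun _ => ENNReal.ofReal (c i)) ↑y :=
          ENNReal.tsum_le_tsum fun y => mul_le_mul_right (hA y (hYA y.2)) _
      _ = ∑' y : Y, ∑' i, ENNReal.ofReal (Real.exp (-(n : ℝ) * s + φn y)) *
            (nBall T n ε (x i)).indicator (fun _ => ENNReal.ofReal (c i)) ↑y := by
          exact tsum_congr fun y => ENNReal.tsum_mul_left.symm
      _ = ∑' i, ∑' y : Y, ENNReal.ofReal (Real.exp (-(n : ℝ) * s + φn y)) *
            (nBall T n ε (x i)).indicator (fun _ => ENNReal.ofReal (c i)) ↑y :=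
          ENNReal.tsum_comm
      _ ≤ ∑' i, ENNReal.ofReal (c i) *
            ENNReal.ofReal (Real.exp (-(n : ℝ) * s + sSup (φn '' nBall T n ε (x i)))) := by
          refine ENNReal.tsum_le_tsum fun i => tsum_le_of_unique _ _ ?_ ?_
          · intro y
            by_cases hmem : (y : X) ∈ nBall T n ε (x i)
            · rw [Set.indicator_of_mem hmem, mul_comm]
              refine mul_le_mul_right (ENNReal.ofReal_le_ofReal ?_) _
              exact Real.exp_le_exp.2
                (add_le_add_right (le_csSup (hbdd i) (mem_image_of_mem _ hmem)) _)
            · simp [Set.indicator_of_notMem hmem]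
          · intro y y' hy hy'
            have hmy : (y : X) ∈ nBall T n ε (x i) := by
              by_contra h
              rw [Set.indicator_of_notMem h, mul_zero] at hy
              exact hy rfl
            have hmy' : (y' : X) ∈ nBall T n ε (x i) := by
              by_contra h
              rw [Set.indicator_of_notMem h, mul_zero] at hy'
              exact hy' rfl
            exact Subtype.ext (hsep (x i) y y' y.2 y'.2 hmy hmy')

theorem tail_shift (f : ℕ → ℝ≥0∞) (N : ℕ) (h0 : ∀ n < N, f n = 0) : ∑' n, f n = ∑' k, f (k + N) := by
  have key : ∀ n : ℕ, f n ≠ 0 → N ≤ n := fun n hn => le_of_not_gt fun h => hn (h0 n h)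
  refine (tsum_eq_tsum_of_ne_zero_bij (fun n => n.1 - N) ?_ ?_ ?_).symm
  · intro a b h
    have h' : a.1 - N = b.1 - N := h
    have ha := key a.1 a.2
    have hb := key b.1 b.2
    simp only [Subtype.ext_iff]
    omega
  · intro k hk
    exact ⟨⟨k + N, hk⟩, by simp⟩
  · intro x
    have := key x.1 x.2
    show f (x.1 - N + N) = f x.1
    congr 1
    omega

end Aux

/-- under tempered distortion, `𝓜^{s+θ}_{N,ε/2}(Z,Φ) ≤ W^s_{N,ε}(Z,Φ)`. -/
theorem stmt8 {X : Type*} [MetricSpace X] [CompactSpace X] (T : X → X) (hT : Continuous T)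
    (φ : ℕ → X → ℝ) (hφ : ∀ n, Continuous (φ n)) (Z : Set X) (hZ : Z.Nonempty)
    (htemp : Tempered T φ) :
    ∀ θ : ℝ, 0 < θ → ∃ ε₀ > (0 : ℝ), ∀ ε : ℝ, 0 < ε → ε < ε₀ →
      ∃ N₀ : ℕ, ∀ N ≥ N₀, ∀ s : ℝ,
        McN T φ Z (s + θ) (ε / 2) N ≤ WN T φ Z s ε N := by
  intro θ hθ
  have hE1 : Real.exp (-θ) < 1 := by
    rw [Real.exp_lt_one_iff]; linarith
  have hE0 : (0:ℝ) ≤ Real.exp (-θ) := (Real.exp_pos _).le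
  have hpos : (0:ℝ) < 1 - Real.exp (-θ) := by linarith
  refine ⟨1, one_pos, fun ε hε _ => ?_⟩
  set N₀ : ℕ := max ⌈2/ε⌉₊ ⌈2/(θ*(1 - Real.exp (-θ)))⌉₊ + 1 with hN₀def
  refine ⟨N₀, fun N hNN₀ s => ?_⟩
  -- two numeric facts about N₀
  have hone : ∀ n : ℕ, N ≤ n → 2 * Real.exp (-(n*ε)) ≤ Real.exp (-(n*(ε/2))) := by
    intro n hn
    have hn' : (2/ε : ℝ) ≤ n := by
      have h1 : (⌈2/ε⌉₊ : ℝ) ≤ n := by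
        have : ⌈2/ε⌉₊ ≤ n := by omega
        exact_mod_cast this
      exact le_trans (Nat.le_ceil _) h1
    have hx : (1:ℝ) ≤ n * ε / 2 := by
      rw [div_le_iff₀ hε] at hn'
      nlinarith
    have h2 : (2:ℝ) ≤ Real.exp (n*ε/2) := by
      have := Real.add_one_le_exp (n*ε/2)
      linarith
    have hsplit : Real.exp (-(n*(ε/2))) = Real.exp (n*ε/2) * Real.exp (-(n*ε)) := by
      rw [← Real.exp_add]; ring_nf
    rw [hsplit]
    exact mul_le_mul_of_nonneg_right h2 (Real.exp_pos _).le
  have htwo : (2:ℝ) ≤ Real.exp (θ*N) * (1 - Real.exp (-θ)) := by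
    have hn' : (2/(θ*(1 - Real.exp (-θ))) : ℝ) ≤ N := by
      have h1 : (⌈2/(θ*(1 - Real.exp (-θ)))⌉₊ : ℝ) ≤ N := by
        have : ⌈2/(θ*(1 - Real.exp (-θ)))⌉₊ ≤ N := by omega
        exact_mod_cast this
      exact le_trans (Nat.le_ceil _) h1
    have hmp : (0:ℝ) < θ*(1 - Real.exp (-θ)) := mul_pos hθ hpos
    rw [div_le_iff₀ hmp] at hn'
    have h3 := Real.add_one_le_exp (θ*N)
    nlinarith [Real.exp_pos (θ*(N:ℝ))]
  clear hN₀def hNN₀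
  -- unfold WN
  rw [WN]
  refine le_iInf fun D => le_iInf fun hDc => le_iInf fun hDmem => le_iInf fun hDcov => ?_
  have hDcnt : Countable ↥D := hDc.to_subtype
  -- threshold sequence
  set E : ℝ := Real.exp (-θ) with hE_def
  set tR : ℕ → ℝ := fun n => Real.exp (θ*N) * Real.exp (-(θ*n)) * (1 - E) / 2 with htR_def
  have htR_pos : ∀ n, 0 < tR n := fun n =>
    div_pos (mul_pos (mul_pos (Real.exp_pos _) (Real.exp_pos _)) hpos) two_pos
  set t : ℕ → ℝ≥0∞ := fun n => ENNReal.ofReal (tR n) with ht_def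
  have ht_pos : ∀ n, 0 < t n := fun n => ENNReal.ofReal_pos.2 (htR_pos n)
  -- fiber sums
  set Sn : ℕ → X → ℝ≥0∞ := fun n z =>
    ∑' p : {q : ↥D // (q : (X × ℕ) × ℝ).1.2 = n},
      (nBall T n ε (p.1 : (X × ℕ) × ℝ).1.1).indicator
        (fun _ => ENNReal.ofReal (p.1 : (X × ℕ) × ℝ).2) z with hSn_def
  have hSn_zero : ∀ n < N, ∀ z, Sn n z = 0 := by
    intro n hn z
    have : IsEmpty {q : ↥D // (q : (X × ℕ) × ℝ).1.2 = n} := by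
      refine ⟨fun p => ?_⟩
      have h1 := (hDmem p.1.1 p.1.2).1
      rw [p.2] at h1
      omega
    exact tsum_empty
  have hSn_total : ∀ z ∈ Z, 1 ≤ ∑' n, Sn n z := by
    intro z hz
    have h := hDcov z hz
    rw [tsum_fiber (fun q : ↥D => (q : (X × ℕ) × ℝ).1.2)] at h
    refine le_trans h (le_of_eq (tsum_congr fun n => tsum_congr fun p => ?_))
    rw [p.2]
  -- the sets Zₙ
  set Zn : ℕ → Set X := fun n => {z ∈ Z | t n ≤ Sn n z} with hZn_def
  have hZn_empty : ∀ n < N, Zn n = ∅ := by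
    intro n hn
    rw [eq_empty_iff_forall_notMem]
    rintro z ⟨hz, hle⟩
    rw [hSn_zero n hn z] at hle
    exact (ht_pos n).ne' (le_zero_iff.1 hle)
  have hZ_sub : Z ⊆ ⋃ n, Zn n := by
    intro z hz
    by_contra hc
    simp only [mem_iUnion, hZn_def, mem_setOf_eq, not_exists, not_and] at hc
    have hlt : ∀ n, Sn n z ≤ (fun n => if n < N then 0 else t n) n := by
      intro n
      by_cases hn : n < N
      · simp [hn, hSn_zero n hn z]
      · simp only [hn, if_false]
        exact (not_le.1 (fun h => hc n hz h)).le
    have h1 := hSn_total z hz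
    have h2 : ∑' n, Sn n z ≤ ∑' n, (fun n => if n < N then 0 else t n) n :=
      ENNReal.tsum_le_tsum hlt
    have h3 : ∑' n, (fun n => if n < N then 0 else t n) n = ENNReal.ofReal (1/2) := by
      rw [tail_shift _ N (fun n hn => if_pos hn)]
      have hk : ∀ k : ℕ, (if k + N < N then (0:ℝ≥0∞) else t (k+N)) =
          ENNReal.ofReal ((1 - E)/2 * E^k) := by
        intro k
        have : ¬ (k + N < N) := by omega
        rw [if_neg this, ht_def]
        congr 1
        have hEk : E^k = Real.exp (-(θ*k)) := by
          rw [hE_def, ← Real.exp_nat_mul]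
          congr 1
          ring
        rw [htR_def, hEk]
        simp only []
        rw [show Real.exp (θ*N) * Real.exp (-(θ*(k+N:ℕ))) = Real.exp (-(θ*k)) by
          rw [← Real.exp_add]; congr 1; push_cast; ring]
        ring
      simp only [hk]
      rw [← ENNReal.ofReal_tsum_of_nonneg (fun k => by positivity)
        ((summable_geometric_of_lt_one hE0 hE1).mul_left _)]
      congr 1
      rw [tsum_mul_left, tsum_geometric_of_lt_one hE0 hE1]
      have hne : (1 - E) ≠ 0 := ne_of_gt hpos
      field_simp
    rw [h3] at h2
    have := le_trans h1 h2
    rw [ENNReal.one_le_ofReal] at this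
    linarith
  -- apply the covering lemma to each n
  have hcore : ∀ n : ℕ, ∃ Y : Set X, Y.Countable ∧
      (Zn n ⊆ ⋃ y ∈ Y, bowenBall T n y (2 * Real.exp (-(n * ε)))) ∧
      (∑' y : Y, ENNReal.ofReal (Real.exp (-(n : ℝ) * s + φ n y))) * t n ≤
        ∑' p : {q : ↥D // (q : (X × ℕ) × ℝ).1.2 = n},
          ENNReal.ofReal (p.1 : (X × ℕ) × ℝ).2 *
          ENNReal.ofReal (Real.exp (-(n : ℝ) * s +
            sSup (φ n '' nBall T n ε (p.1 : (X × ℕ) × ℝ).1.1))) := by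
    intro n
    exact core_cover hT (hφ n) n ε s
      (fun p : {q : ↥D // (q : (X × ℕ) × ℝ).1.2 = n} => (p.1 : (X × ℕ) × ℝ).1.1)
      (fun p => (p.1 : (X × ℕ) × ℝ).2) (Zn n) (t n) (fun z hz => hz.2)
  choose Y hYc hYcov hYsum using hcore
  -- the covering family for McN
  set D' : Set (X × ℕ) := {q | N ≤ q.2 ∧ q.1 ∈ Y q.2} with hD'_def
  have hD'c : D'.Countable := by
    refine Set.Countable.mono ?_ (countable_iUnion fun n => (hYc n).image (fun y => (y, n)))
    rintro ⟨y, n⟩ ⟨hn, hy⟩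
    exact mem_iUnion.2 ⟨n, ⟨y, hy, rfl⟩⟩
  have hD'mem : ∀ p ∈ D', N ≤ p.2 := fun p hp => hp.1
  have hD'cov : Z ⊆ ⋃ p ∈ D', nBall T p.2 (ε/2) p.1 := by
    intro z hz
    obtain ⟨n, hzn⟩ := mem_iUnion.1 (hZ_sub hz)
    have hNn : N ≤ n := by
      by_contra h
      rw [hZn_empty n (not_le.1 h)] at hzn
      exact hzn
    obtain ⟨y, hy, hzy⟩ := mem_iUnion₂.1 (hYcov n hzn)
    refine mem_biUnion (show (y, n) ∈ D' from ⟨hNn, hy⟩) ?_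
    exact bowenBall_mono T n y (hone n hNn) hzy
  -- conclude via the defining infimum of McN
  rw [McN]
  refine le_trans (iInf_le_of_le D' (iInf_le_of_le hD'c (iInf_le_of_le hD'mem
    (iInf_le_of_le hD'cov le_rfl)))) ?_
  -- compare the two sums fiberwise
  rw [tsum_fiber (fun q : ↥D' => (q : X × ℕ).2),
    tsum_fiber (fun q : ↥D => (q : (X × ℕ) × ℝ).1.2)]
  refine ENNReal.tsum_le_tsum fun n => ?_
  by_cases hNn : N ≤ n
  · -- identify the fiber of D' with Y n
    let e : {q : ↥D' // (q : X × ℕ).2 = n} ≃ ↥(Y n) :=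
      { toFun := fun q => ⟨(q.1 : X × ℕ).1, by
          have h := q.1.2.2
          rw [q.2] at h
          exact h⟩
        invFun := fun y => ⟨⟨(y.1, n), ⟨hNn, y.2⟩⟩, rfl⟩
        left_inv := by
          rintro ⟨⟨⟨a, m⟩, hq⟩, (rfl : m = n)⟩
          rfl
        right_inv := fun y => rfl }
    have hL : ∑' q : {q : ↥D' // (q : X × ℕ).2 = n},
        ENNReal.ofReal (Real.exp (-((q.1 : X × ℕ).2 : ℝ) * (s + θ) + φ (q.1 : X × ℕ).2 (q.1 : X × ℕ).1)) =
        ∑' y : Y n, ENNReal.ofReal (Real.exp (-(n : ℝ) * (s + θ) + φ n y)) := by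
      calc ∑' q : {q : ↥D' // (q : X × ℕ).2 = n},
          ENNReal.ofReal (Real.exp (-((q.1 : X × ℕ).2 : ℝ) * (s + θ) + φ (q.1 : X × ℕ).2 (q.1 : X × ℕ).1))
          = ∑' q : {q : ↥D' // (q : X × ℕ).2 = n},
            ENNReal.ofReal (Real.exp (-(n : ℝ) * (s + θ) + φ n (q.1 : X × ℕ).1)) :=
            tsum_congr fun q => by rw [q.2]
        _ = ∑' y : Y n, ENNReal.ofReal (Real.exp (-(n : ℝ) * (s + θ) + φ n y)) := by
            rw [← e.tsum_eq (fun y : ↥(Y n) =>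
              ENNReal.ofReal (Real.exp (-(n : ℝ) * (s + θ) + φ n ↑y)))]
            exact tsum_congr fun q => rfl
    rw [hL]
    have hsplit : ∀ y : Y n, ENNReal.ofReal (Real.exp (-(n : ℝ) * (s + θ) + φ n y)) =
        ENNReal.ofReal (Real.exp (-(θ*n))) * ENNReal.ofReal (Real.exp (-(n : ℝ) * s + φ n y)) := by
      intro y
      rw [← ENNReal.ofReal_mul (Real.exp_pos _).le, ← Real.exp_add]
      congr 2
      ring
    calc ∑' y : Y n, ENNReal.ofReal (Real.exp (-(n : ℝ) * (s + θ) + φ n y))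
        = ENNReal.ofReal (Real.exp (-(θ*n))) *
          ∑' y : Y n, ENNReal.ofReal (Real.exp (-(n : ℝ) * s + φ n y)) := by
          rw [← ENNReal.tsum_mul_left]
          exact tsum_congr hsplit
      _ ≤ t n * ∑' y : Y n, ENNReal.ofReal (Real.exp (-(n : ℝ) * s + φ n y)) := by
          refine mul_le_mul_left (ENNReal.ofReal_le_ofReal ?_) _
          have hEN : (1:ℝ) ≤ Real.exp (θ*N) * (1 - E) / 2 := by
            rw [hE_def]; linarith
          have := mul_le_mul_of_nonneg_left hEN (Real.exp_pos (-(θ*(n:ℝ)))).le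
          rw [htR_def]
          nlinarith [Real.exp_pos (-(θ*(n:ℝ)))]
      _ = (∑' y : Y n, ENNReal.ofReal (Real.exp (-(n : ℝ) * s + φ n y))) * t n := mul_comm _ _
      _ ≤ ∑' p : {q : ↥D // (q : (X × ℕ) × ℝ).1.2 = n},
            ENNReal.ofReal (p.1 : (X × ℕ) × ℝ).2 *
            ENNReal.ofReal (Real.exp (-(n : ℝ) * s +
              sSup (φ n '' nBall T n ε (p.1 : (X × ℕ) × ℝ).1.1))) := hYsum n
      _ = ∑' p : {q : ↥D // (q : (X × ℕ) × ℝ).1.2 = n},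
            ENNReal.ofReal (p.1 : (X × ℕ) × ℝ).2 *
            wSup T φ s ε (p.1 : (X × ℕ) × ℝ).1.2 (p.1 : (X × ℕ) × ℝ).1.1 := by
          refine tsum_congr fun p => ?_
          rw [wSup, p.2]
  · -- empty fiber
    have : IsEmpty {q : ↥D' // (q : X × ℕ).2 = n} := by
      refine ⟨fun q => ?_⟩
      have h1 := q.1.2.1
      rw [q.2] at h1
      omega
    rw [tsum_empty]
    exact zero_le
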